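/- For all N > 2, the clique covering number of the Johnson graph J(N,2) satisfies θ(J(N,2)) ≤ N − 2. Specifically, the collection {A_{{1}}^N, ..., A_{{N−3}}^N, B_{{N−2,N−1,N}}^N} is a clique cover of J(N,2) of size N−2. -/

import Mathlib

/-- The Johnson graph `J(N, k)`. -/
def johnson (N k : ℕ) : SimpleGraph {S : Finset (Fin N) // S.card = k} where
  Adj S T := S ≠ T ∧ (S.1 ∩ T.1).card = k - 1
  symm := by
    constructor
    intro S T h
    exact ⟨h.1.symm, by rw [Finset.inter_comm]; exact h.2⟩
  loopless := by
    constructor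
    intro S h
    exact h.1 rfl

/-- The (vertex) clique covering number of a graph. -/
noncomputable def theta {V : Type*} (G : SimpleGraph V) : ℕ :=
  sInf {n | ∃ 𝒞 : Finset (Set V), 𝒞.card = n ∧ (∀ C ∈ 𝒞, G.IsClique C) ∧
    ∀ v, ∃ C ∈ 𝒞, v ∈ C}

/-- The type A clique `A_{{i}}^N` of `J(N, 2)`: all 2-sets containing `i`. -/
def coverA (N : ℕ) (i : Fin N) : Set {S : Finset (Fin N) // S.card = 2} :=
  {T | i ∈ T.1}

/-- The type B clique `B_{{N-2, N-1, N}}^N` of `J(N, 2)`: all 2-subsets of the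
three largest elements of `[N]` (indices `≥ N - 3` in `Fin N`). -/
def coverB (N : ℕ) : Set {S : Finset (Fin N) // S.card = 2} :=
  {T | ∀ x ∈ T.1, N - 3 ≤ (x : ℕ)}

/-- The collection `{A_{{1}}, …, A_{{N-3}}, B_{{N-2, N-1, N}}}`
(elements `1, …, N-3` correspond to indices `0, …, N-4` in `Fin N`). -/
def cover4 (N : ℕ) : Set (Set {S : Finset (Fin N) // S.card = 2}) :=
  (fun i => coverA N i) '' {i : Fin N | (i : ℕ) < N - 3} ∪ {coverB N}

lemma inter_card_one {N : ℕ} {S T : Finset (Fin N)} (hS : S.card = 2) (hT : T.card = 2)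
    (hne : S ≠ T) (h1 : 1 ≤ (S ∩ T).card) : (S ∩ T).card = 1 := by
  have h2 : (S ∩ T).card ≤ 2 := hS ▸ Finset.card_le_card Finset.inter_subset_left
  rcases Nat.lt_or_ge (S ∩ T).card 2 with h | h
  · omega
  · exfalso
    have e1 : S ∩ T = S := Finset.eq_of_subset_of_card_le Finset.inter_subset_left (by omega)
    have e2 : S ∩ T = T := Finset.eq_of_subset_of_card_le Finset.inter_subset_right (by omega)
    exact hne (e1.symm.trans e2)

lemma cliqueA {N : ℕ} (i : Fin N) : (johnson N 2).IsClique (coverA N i) := by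
  intro S hS T hT hne
  exact ⟨hne, inter_card_one S.2 T.2 (fun h => hne (Subtype.ext h))
    (Finset.card_pos.mpr ⟨i, Finset.mem_inter.mpr ⟨hS, hT⟩⟩)⟩

lemma cliqueB {N : ℕ} : (johnson N 2).IsClique (coverB N) := by
  intro S hS T hT hne
  refine ⟨hne, ?_⟩
  have hne' : S.1 ≠ T.1 := fun h => hne (Subtype.ext h)
  have hsub : S.1 ∪ T.1 ⊆ Finset.univ.filter fun x : Fin N => N - 3 ≤ x.val := by
    intro x hx
    simp only [Finset.mem_filter, Finset.mem_univ, true_and]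
    rcases Finset.mem_union.mp hx with h | h
    exacts [hS x h, hT x h]
  have hF : (Finset.univ.filter fun x : Fin N => N - 3 ≤ x.val).card ≤ (Finset.Ico (N - 3) N).card :=
    Finset.card_le_card_of_injOn Fin.val
      (fun a ha => Finset.mem_Ico.mpr ⟨(Finset.mem_filter.mp ha).2, a.2⟩)
      (fun a _ b _ h => Fin.ext h)
  have hIc : (Finset.Ico (N - 3) N).card ≤ 3 := by rw [Nat.card_Ico]; omega
  have hcard : (S.1 ∪ T.1).card ≤ 3 := le_trans (le_trans (Finset.card_le_card hsub) hF) hIc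
  have hiu := Finset.card_inter_add_card_union S.1 T.1
  exact inter_card_one S.2 T.2 hne' (by omega)


/-- For `N > 2`, the collection `{A_{{1}}, …, A_{{N-3}}, B_{{N-2,N-1,N}}}` is a
clique cover of `J(N, 2)` of size `N - 2`; hence `θ(J(N, 2)) ≤ N - 2`. -/
theorem theta_johnson_two_le (N : ℕ) (hN : 2 < N) :
    (∀ C ∈ cover4 N, (johnson N 2).IsClique C) ∧
    (∀ v, ∃ C ∈ cover4 N, v ∈ C) ∧
    (cover4 N).ncard = N - 2 ∧
    theta (johnson N 2) ≤ N - 2 := by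
  classical
  -- cliques
  have hclique : ∀ C ∈ cover4 N, (johnson N 2).IsClique C := by
    rintro C (⟨i, _, rfl⟩ | hC)
    · exact cliqueA i
    · rw [Set.mem_singleton_iff] at hC
      exact hC ▸ cliqueB
  -- coverage
  have hcov : ∀ v, ∃ C ∈ cover4 N, v ∈ C := by
    intro v
    rcases Finset.card_eq_two.mp v.2 with ⟨a, b, hab, hv⟩
    by_cases ha : (a : ℕ) < N - 3
    · exact ⟨coverA N a, Or.inl ⟨a, ha, rfl⟩, by simp [coverA, hv]⟩
    · by_cases hb : (b : ℕ) < N - 3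
      · exact ⟨coverA N b, Or.inl ⟨b, hb, rfl⟩, by simp [coverA, hv]⟩
      · refine ⟨coverB N, Or.inr rfl, ?_⟩
        intro x hx
        rw [hv, Finset.mem_insert, Finset.mem_singleton] at hx
        rcases hx with rfl | rfl <;> omega
  -- injectivity of coverA on the index set
  have hAinj : Set.InjOn (fun i => coverA N i) {i : Fin N | (i : ℕ) < N - 3} := by
    intro i _ j _ h
    by_contra hij
    have hcompl : (({i, j} : Finset (Fin N))ᶜ).Nonempty := by
      rw [← Finset.card_pos, Finset.card_compl]
      have h2 : ({i, j} : Finset (Fin N)).card ≤ 2 :=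
        le_trans (Finset.card_insert_le i {j}) (by simp)
      have := Fintype.card_fin N
      omega
    obtain ⟨k, hk⟩ := hcompl
    rw [Finset.mem_compl, Finset.mem_insert, Finset.mem_singleton] at hk
    push_neg at hk
    have hT : ({i, k} : Finset (Fin N)).card = 2 := Finset.card_pair (Ne.symm hk.1)
    have hmem : (⟨{i, k}, hT⟩ : {S : Finset (Fin N) // S.card = 2}) ∈ coverA N i := by
      simp [coverA]
    replace h : coverA N i = coverA N j := h
    rw [h] at hmem
    simp only [coverA, Set.mem_setOf_eq, Finset.mem_insert, Finset.mem_singleton] at hmem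
    rcases hmem with rfl | rfl
    · exact hij rfl
    · exact hk.2 rfl
  -- coverB is not a coverA
  have hBnot : coverB N ∉ (fun i => coverA N i) '' {i : Fin N | (i : ℕ) < N - 3} := by
    rintro ⟨i, hi, heq⟩
    set a : Fin N := ⟨N - 1, by omega⟩
    set b : Fin N := ⟨N - 2, by omega⟩
    have hab : a ≠ b := by
      intro h
      have := Fin.mk.injEq (N - 1) (by omega : N - 1 < N) (N - 2) (by omega) ▸ h
      simp [a, b, Fin.ext_iff] at h
      omega
    have hT : ({a, b} : Finset (Fin N)).card = 2 := Finset.card_pair hab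
    have hmem : (⟨{a, b}, hT⟩ : {S : Finset (Fin N) // S.card = 2}) ∈ coverB N := by
      intro x hx
      rw [Finset.mem_insert, Finset.mem_singleton] at hx
      rcases hx with rfl | rfl <;> simp [a, b] <;> omega
    rw [← heq] at hmem
    simp only [coverA, Set.mem_setOf_eq, Finset.mem_insert, Finset.mem_singleton] at hmem
    rw [Set.mem_setOf_eq] at hi
    rcases hmem with rfl | rfl <;> simp [a, b] at hi <;> omega
  -- the index set as a finset
  have hsetcard : ({i : Fin N | (i : ℕ) < N - 3}).ncard = N - 3 := by
    have he : {i : Fin N | (i : ℕ) < N - 3} = ↑(Finset.Iio (⟨N - 3, by omega⟩ : Fin N)) := by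
      ext x
      simp [Fin.lt_def]
    rw [he, Set.ncard_coe_finset, Fin.card_Iio]
  -- ncard of cover4
  have hncard : (cover4 N).ncard = N - 2 := by
    rw [cover4, Set.ncard_union_eq (Set.disjoint_singleton_right.mpr hBnot)
      ((Set.toFinite _).image _) (Set.finite_singleton _),
      Set.ncard_image_of_injOn hAinj, hsetcard, Set.ncard_singleton]
    omega
  refine ⟨hclique, hcov, hncard, ?_⟩
  -- theta bound
  set F : Finset (Fin N) := Finset.univ.filter fun i : Fin N => (i : ℕ) < N - 3 with hF
  have hiff : ∀ C, C ∈ (F.image (coverA N) ∪ {coverB N} : Finset _) ↔ C ∈ cover4 N := by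
    intro C
    simp only [cover4, F, Set.mem_union, Set.mem_image, Set.mem_setOf_eq,
      Finset.mem_union, Finset.mem_image, Finset.mem_filter, Finset.mem_univ, true_and,
      Finset.mem_singleton, Set.mem_singleton_iff]
    try tauto
  refine Nat.sInf_le ⟨F.image (coverA N) ∪ {coverB N}, ?_, ?_, ?_⟩
  · rw [Finset.card_union_of_disjoint, Finset.card_image_of_injOn, Finset.card_singleton]
    · have : F.card = N - 3 := by
        have he : F = Finset.Iio (⟨N - 3, by omega⟩ : Fin N) := by
          ext x; simp [F, Fin.lt_def]
        rw [he, Fin.card_Iio]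
      omega
    · intro i hi j hj h
      exact hAinj (by simpa [F] using hi) (by simpa [F] using hj) h
    · rw [Finset.disjoint_singleton_right, Finset.mem_image]
      rintro ⟨i, hi, heq⟩
      exact hBnot ⟨i, by simpa [F] using hi, heq⟩
  · intro C hC
    exact hclique C ((hiff C).mp hC)
  · intro v
    obtain ⟨C, hC, hvC⟩ := hcov v
    exact ⟨C, (hiff C).mpr hC, hvC⟩
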